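/- Let (A_•, f_•) be a complex of length n in C. If Hom(A_{i+k+1}⟦k⟧, A_i) = 0 for all i ≥ 0 and k ≥ 1 (whenever i + k + 1 ≤ n), then any two convolutions of (A_•, f_•) are isomorphic. -/

import Mathlib

/-!
Statement 2: If `(A_•, f_•)` is a complex of length `n` in a pretriangulated category `C`
and `Hom(A_{i+k+1}⟦k⟧, A_i) = 0` for all `i ≥ 0`, `k ≥ 1` (with `i + k + 1 ≤ n`), then any
two convolutions of `(A_•, f_•)` are isomorphic.
-/

open CategoryTheory CategoryTheory.Limits CategoryTheory.Pretriangulated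

variable {C : Type*} [Category C] [Preadditive C] [HasZeroObject C] [HasShift C ℤ]
  [∀ n : ℤ, (shiftFunctor C n).Additive] [Pretriangulated C]

/-- A Postnikov system for the length-`n` complex
`A n ⟶ A (n-1) ⟶ ⋯ ⟶ A 0` (with differentials `f i : A (i+1) ⟶ A i`):
objects `B 0 = A 0, B 1, …, B n` together with morphisms
`g i : (B i)⟦-i⟧ ⟶ A i` and (paper indexing) `h (i+1) : A (i+1) ⟶ (B i)⟦-i⟧` such that
each `(B (i+1))⟦-(i+1)⟧ ⟶ A (i+1) ⟶ (B i)⟦-i⟧` extends to a distinguished triangle and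
`g i ∘ h (i+1) = f (i+1)`.  The identification `B 0 = A 0` (with `g 0 = id`, `h 0 = id`)
is recorded by requiring `g 0` to be an isomorphism. -/
structure PostnikovSystem (n : ℕ) (A : ℕ → C) (f : ∀ i : ℕ, A (i + 1) ⟶ A i) where
  B : ℕ → C
  g : ∀ i : ℕ, (B i)⟦(-(i : ℤ))⟧ ⟶ A i
  h : ∀ i : ℕ, A (i + 1) ⟶ (B i)⟦(-(i : ℤ))⟧
  g0_isIso : IsIso (g 0)
  comm : ∀ i : ℕ, i < n → h i ≫ g i = f i
  tri : ∀ i : ℕ, i < n →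
    ∃ d : (B i)⟦(-(i : ℤ))⟧ ⟶ ((B (i + 1))⟦(-((i : ℤ) + 1))⟧)⟦(1 : ℤ)⟧,
      Triangle.mk (g (i + 1)) (h i) d ∈ distTriang C

/-- `X` is a (right) convolution of the length-`n` complex `(A, f)` if there is a Postnikov
system for it whose final object `B n` is isomorphic to `X`. -/
def IsConvolution (n : ℕ) (A : ℕ → C) (f : ∀ i : ℕ, A (i + 1) ⟶ A i) (X : C) : Prop :=
  ∃ P : PostnikovSystem n A f, Nonempty (P.B n ≅ X)

/-- If all maps `X⟦1⟧ ⟶ Y` vanish, then all maps `X ⟶ Y⟦-1⟧` vanish. -/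
lemma zero_of_shift_zero {X Y : C} (h : ∀ χ : (X⟦(1 : ℤ)⟧ ⟶ Y), χ = 0)
    (ψ : X ⟶ Y⟦(-1 : ℤ)⟧) : ψ = 0 := by
  apply (shiftFunctor C (1 : ℤ)).map_injective
  rw [Functor.map_zero, ← cancel_mono ((shiftNegShift Y (1 : ℤ)).hom), zero_comp]
  exact h _

/-- Key vanishing: `Hom(A (j+k+1)⟦k⟧, (B j)⟦-j⟧) = 0` for any Postnikov system. -/
lemma postnikov_vanish (n : ℕ) (A : ℕ → C) (f : ∀ i : ℕ, A (i + 1) ⟶ A i)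
    (hvan : ∀ i k : ℕ, 1 ≤ k → i + k + 1 ≤ n →
      ∀ φ : (A (i + k + 1))⟦(k : ℤ)⟧ ⟶ A i, φ = 0)
    (P : PostnikovSystem n A f) :
    ∀ j k m : ℕ, 1 ≤ k → m = j + k + 1 → m ≤ n →
      ∀ φ : (A m)⟦(k : ℤ)⟧ ⟶ (P.B j)⟦(-(j : ℤ))⟧, φ = 0 := by
  intro j
  induction j with
  | zero =>
    intro k m hk hm hn φ
    subst hm
    haveI := P.g0_isIso
    have h0 : φ ≫ P.g 0 = 0 := hvan 0 k hk hn (φ ≫ P.g 0)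
    rw [← Category.comp_id φ, ← IsIso.hom_inv_id (P.g 0), ← Category.assoc, h0, zero_comp]
  | succ j ih =>
    intro k m hk hm hn φ
    subst hm
    obtain ⟨d, hd⟩ := P.tri j (by omega)
    have h1 : φ ≫ P.g (j + 1) = 0 := hvan (j + 1) k hk hn (φ ≫ P.g (j + 1))
    obtain ⟨ψ, hψ⟩ := Triangle.coyoneda_exact₂ _
      (inv_rot_of_distTriang _ hd) φ h1
    have hψ0 : ψ = 0 := by
      apply zero_of_shift_zero
      intro χ
      have e : ((A (j + 1 + k + 1))⟦((k + 1 : ℕ) : ℤ)⟧ : C) ≅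
          ((A (j + 1 + k + 1))⟦(k : ℤ)⟧)⟦(1 : ℤ)⟧ :=
        (shiftFunctorAdd' C (k : ℤ) (1 : ℤ) ((k + 1 : ℕ) : ℤ)
          (by push_cast; ring)).app (A (j + 1 + k + 1))
      have h2 : e.hom ≫ χ = 0 :=
        ih (k + 1) (j + 1 + k + 1) (by omega) (by omega) hn (e.hom ≫ χ)
      rw [← cancel_epi e.hom, comp_zero]
      exact h2
    rw [hψ, hψ0, zero_comp]; rfl

/-- Main inductive step: the shifted partial convolutions are isomorphic compatibly
with the `g`'s. -/
lemma postnikov_iso (n : ℕ) (A : ℕ → C) (f : ∀ i : ℕ, A (i + 1) ⟶ A i)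
    (hvan : ∀ i k : ℕ, 1 ≤ k → i + k + 1 ≤ n →
      ∀ φ : (A (i + k + 1))⟦(k : ℤ)⟧ ⟶ A i, φ = 0)
    (P Q : PostnikovSystem n A f) :
    ∀ i : ℕ, i ≤ n →
      ∃ α : ((P.B i)⟦(-(i : ℤ))⟧ : C) ≅ (Q.B i)⟦(-(i : ℤ))⟧, α.hom ≫ Q.g i = P.g i := by
  intro i
  induction i with
  | zero =>
    intro _
    haveI := P.g0_isIso
    haveI := Q.g0_isIso
    exact ⟨asIso (P.g 0) ≪≫ (asIso (Q.g 0)).symm, by simp⟩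
  | succ i ih =>
    intro hi
    obtain ⟨α, hα⟩ := ih (by omega)
    -- First show compatibility with h.
    have hkey : P.h i ≫ α.hom = Q.h i := by
      have hδ : (P.h i ≫ α.hom - Q.h i) ≫ Q.g i = 0 := by
        rw [Preadditive.sub_comp, Category.assoc, hα, P.comm i (by omega), Q.comm i (by omega), sub_self]
      have hδ0 : P.h i ≫ α.hom - Q.h i = 0 := by
        match i, hi with
        | 0, _ =>
          haveI := Q.g0_isIso
          rw [← cancel_mono (Q.g 0), zero_comp]
          exact hδ
        | (j + 1), hi =>
          obtain ⟨d, hd⟩ := Q.tri j (by omega)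
          obtain ⟨ψ, hψ⟩ := Triangle.coyoneda_exact₂ _
            (inv_rot_of_distTriang _ hd) (P.h (j + 1) ≫ α.hom - Q.h (j + 1)) hδ
          have hψ0 : ψ = 0 := by
            apply zero_of_shift_zero
            intro χ
            exact postnikov_vanish n A f hvan Q j 1 (j + 1 + 1) le_rfl (by omega)
              (by omega) χ
          rw [hψ, hψ0, zero_comp]; rfl
      exact sub_eq_zero.mp hδ0
    -- Now complete to a morphism of triangles.
    obtain ⟨dP, hdP⟩ := P.tri i (by omega)
    obtain ⟨dQ, hdQ⟩ := Q.tri i (by omega)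
    obtain ⟨a, ha₁, ha₂⟩ := complete_distinguished_triangle_morphism₁ _ _ hdP hdQ
      (𝟙 (A (i + 1))) α.hom (by exact hkey.trans (Category.id_comp _).symm)
    dsimp at ha₁ ha₂
    let φ : Triangle.mk (P.g (i + 1)) (P.h i) dP ⟶ Triangle.mk (Q.g (i + 1)) (Q.h i) dQ :=
      { hom₁ := a
        hom₂ := 𝟙 _
        hom₃ := α.hom
        comm₁ := ha₁
        comm₂ := by exact hkey.trans (Category.id_comp _).symm
        comm₃ := ha₂ }
    haveI : IsIso φ.hom₂ := by dsimp [φ]; exact IsIso.id _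
    haveI : IsIso φ.hom₃ := by dsimp [φ]; exact Iso.isIso_hom α
    haveI : IsIso a := isIso₁_of_isIso₂₃ φ hdP hdQ inferInstance inferInstance
    exact ⟨@asIso _ _ _ _ a this, by exact ha₁.symm.trans (Category.comp_id _)⟩
  
theorem convolution_unique
    (n : ℕ) (A : ℕ → C) (f : ∀ i : ℕ, A (i + 1) ⟶ A i)
    (hcx : ∀ i : ℕ, i + 1 < n → f (i + 1) ≫ f i = 0)
    (hvan : ∀ i k : ℕ, 1 ≤ k → i + k + 1 ≤ n →
      ∀ φ : (A (i + k + 1))⟦(k : ℤ)⟧ ⟶ A i, φ = 0)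
    (X Y : C) (hX : IsConvolution n A f X) (hY : IsConvolution n A f Y) :
    Nonempty (X ≅ Y) := by
  obtain ⟨P, ⟨iX⟩⟩ := hX
  obtain ⟨Q, ⟨iY⟩⟩ := hY
  obtain ⟨α, -⟩ := postnikov_iso n A f hvan P Q n le_rfl
  exact ⟨iX.symm ≪≫ (shiftFunctor C (-(n : ℤ))).preimageIso α ≪≫ iY⟩
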